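/- In the martingale setting with weight v, weight vector ω⃗, and exponents 1 < p_i < ∞ with ∑ 1/p_i = 1/p, under the standing assumptions: if the weak-type inequality ‖𝔐(f⃗)‖_{L^{p,∞}(v)} ≤ C ∏_{i=1}^∞ ‖f_i‖_{L^{p_i}(ω_i)} holds for all admissible f⃗, then for every stopping time τ, (∫_{{τ<∞}} ∏_{i=1}^∞ E_τ(f_i)^p v dμ)^{1/p} ≤ C' ∏_{i=1}^∞ ‖f_i‖_{L^{p_i}(ω_i)}. -/

import Mathlib

open MeasureTheory Filter
open scoped ENNReal NNReal

noncomputable section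

/-- Limit of partial products in ℝ≥0∞ (via limsup; equals the limit when it exists). -/
def prodLim (a : ℕ → ℝ≥0∞) : ℝ≥0∞ :=
  Filter.limsup (fun k => ∏ i ∈ Finset.range k, a i) Filter.atTop

/-- Convergence of an infinite product in ℝ≥0∞. -/
def HasProdLim (a : ℕ → ℝ≥0∞) (L : ℝ≥0∞) : Prop :=
  Filter.Tendsto (fun k => ∏ i ∈ Finset.range k, a i) Filter.atTop (nhds L)

variable {Ω : Type*}

/-- Weighted L^q norm ‖f‖_{L^q(w)} = (∫ f^q w dμ)^{1/q}. -/
def wNorm {m : MeasurableSpace Ω} (μ : Measure Ω) (f : Ω → ℝ) (q : ℝ) (w : Ω → ℝ) : ℝ≥0∞ :=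
  (∫⁻ x, ENNReal.ofReal (f x) ^ q * ENNReal.ofReal (w x) ∂μ) ^ (1 / q)

/-- Conjugate exponent q' = q/(q-1). -/
def conjExp (q : ℝ) : ℝ := q / (q - 1)

/-- σ = w^{1-q'} = w^{-1/(q-1)}. -/
def sigmaW (w : Ω → ℝ) (q : ℝ) : Ω → ℝ := fun x => w x ^ (-(1 / (q - 1)))

/-- Generalized Doob maximal operator 𝔐(f⃗) = sup_n ∏ᵢ E(f i | ℱ n). -/
def doobM {m0 : MeasurableSpace Ω} (μ : Measure Ω) (ℱ : Filtration ℕ m0)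
    (f : ℕ → Ω → ℝ) (x : Ω) : ℝ≥0∞ :=
  ⨆ n, prodLim fun i => ENNReal.ofReal ((μ[f i|ℱ n]) x)

/-- ℕ∞-valued stopping time with respect to the filtration ℱ. -/
def IsStopT {m0 : MeasurableSpace Ω} (ℱ : Filtration ℕ m0) (τ : Ω → ℕ∞) : Prop :=
  ∀ n : ℕ, MeasurableSet[ℱ n] {x | τ x ≤ (n : ℕ∞)}

/-- E_τ(f), relevant on {τ < ∞} (junk value, via `toNat`, elsewhere). -/
def stopCE {m0 : MeasurableSpace Ω} (μ : Measure Ω) (ℱ : Filtration ℕ m0) (f : Ω → ℝ)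
    (τ : Ω → ℕ∞) (x : Ω) : ℝ := (μ[f|ℱ (τ x).toNat]) x

/-- Weighted weak-L^q norm ‖g‖_{L^{q,∞}(v)} = sup_λ λ |{g > λ}|_v^{1/q}. -/
def wkNorm {m : MeasurableSpace Ω} (μ : Measure Ω) (g : Ω → ℝ≥0∞) (q : ℝ) (v : Ω → ℝ) : ℝ≥0∞ :=
  ⨆ lam : ℝ≥0, (lam : ℝ≥0∞) *
    (∫⁻ x in {x | (lam : ℝ≥0∞) < g x}, ENNReal.ofReal (v x) ∂μ) ^ (1 / q)

/-- Admissibility of f⃗: each f i nonnegative measurable with f i ∈ L^{p i}(ω i), and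
∏ᵢ ‖f i‖_{L^{p i}(ω i)} convergent with finite value Lf. -/
def Adm {m : MeasurableSpace Ω} (μ : Measure Ω) (p : ℕ → ℝ) (ω : ℕ → Ω → ℝ)
    (f : ℕ → Ω → ℝ) (Lf : ℝ≥0∞) : Prop :=
  (∀ i, Measurable (f i)) ∧ (∀ i x, 0 ≤ f i x) ∧ (∀ i, wNorm μ (f i) (p i) (ω i) ≠ ⊤) ∧
    Lf ≠ ⊤ ∧ HasProdLim (fun i => wNorm μ (f i) (p i) (ω i)) Lf

/-- The testing inequality: for all stopping times τ and admissible f⃗,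
(∫_{τ<∞} ∏ᵢ E_τ(f i)^{p₀} v dμ)^{1/p₀} ≤ C ∏ᵢ ‖f i‖_{L^{p i}(ω i)}. -/
def TestIneq {m0 : MeasurableSpace Ω} (μ : Measure Ω) (ℱ : Filtration ℕ m0)
    (p : ℕ → ℝ) (p₀ : ℝ) (v : Ω → ℝ) (ω : ℕ → Ω → ℝ) (C : ℝ≥0∞) : Prop :=
  ∀ τ : Ω → ℕ∞, IsStopT ℱ τ → ∀ f Lf, Adm μ p ω f Lf →
    (∫⁻ x in {x | τ x ≠ ⊤},
        (prodLim fun i => ENNReal.ofReal (stopCE μ ℱ (f i) τ x)) ^ p₀ *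
          ENNReal.ofReal (v x) ∂μ) ^ (1 / p₀) ≤ C * Lf

/-- The weak-type inequality ‖𝔐(f⃗)‖_{L^{p₀,∞}(v)} ≤ C ∏ᵢ ‖f i‖_{L^{p i}(ω i)}. -/
def WeakIneq {m0 : MeasurableSpace Ω} (μ : Measure Ω) (ℱ : Filtration ℕ m0)
    (p : ℕ → ℝ) (p₀ : ℝ) (v : Ω → ℝ) (ω : ℕ → Ω → ℝ) (C : ℝ≥0∞) : Prop :=
  ∀ f Lf, Adm μ p ω f Lf → wkNorm μ (doobM μ ℱ f) p₀ v ≤ C * Lf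

/-- The strong-type inequality ‖𝔐(f⃗)‖_{L^{p₀}(v)} ≤ C ∏ᵢ ‖f i‖_{L^{p i}(ω i)}. -/
def StrongIneq {m0 : MeasurableSpace Ω} (μ : Measure Ω) (ℱ : Filtration ℕ m0)
    (p : ℕ → ℝ) (p₀ : ℝ) (v : Ω → ℝ) (ω : ℕ → Ω → ℝ) (C : ℝ≥0∞) : Prop :=
  ∀ f Lf, Adm μ p ω f Lf →
    (∫⁻ x, doobM μ ℱ f x ^ p₀ * ENNReal.ofReal (v x) ∂μ) ^ (1 / p₀) ≤ C * Lf

/-- The A_{p⃗} condition: E_n(v)^{1/p₀} ∏ᵢ E_n(ω i^{1-p i'})^{1/p i'} ≤ C for all n. -/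
def ApCond {m0 : MeasurableSpace Ω} (μ : Measure Ω) (ℱ : Filtration ℕ m0)
    (p : ℕ → ℝ) (p₀ : ℝ) (v : Ω → ℝ) (ω : ℕ → Ω → ℝ) (C : ℝ≥0∞) : Prop :=
  ∀ n : ℕ, ∀ᵐ x ∂μ,
    ENNReal.ofReal ((μ[v|ℱ n]) x) ^ (1 / p₀) *
      prodLim (fun i =>
        ENNReal.ofReal ((μ[sigmaW (ω i) (p i)|ℱ n]) x) ^ (1 / conjExp (p i))) ≤ C

/-- The reverse Hölder condition RH_{p⃗}:
∏ᵢ (∫_{τ<∞} σ i dμ)^{p₀/p i} ≤ C ∫_{τ<∞} ∏ᵢ (σ i)^{p₀/p i} dμ for all stopping times τ. -/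
def RHCond {m0 : MeasurableSpace Ω} (μ : Measure Ω) (ℱ : Filtration ℕ m0)
    (p : ℕ → ℝ) (p₀ : ℝ) (ω : ℕ → Ω → ℝ) (C : ℝ≥0∞) : Prop :=
  ∀ τ : Ω → ℕ∞, IsStopT ℱ τ →
    prodLim (fun i =>
        (∫⁻ x in {x | τ x ≠ ⊤}, ENNReal.ofReal (sigmaW (ω i) (p i) x) ∂μ) ^ (p₀ / p i))
      ≤ C * ∫⁻ x in {x | τ x ≠ ⊤},
          prodLim (fun i => ENNReal.ofReal (sigmaW (ω i) (p i) x) ^ (p₀ / p i)) ∂μ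

/-- The testing condition S_{p⃗}:
(∫_{τ<∞} 𝔐(σ⃗ χ_{τ<∞})^{p₀} v dμ)^{1/p₀} ≤ C ∏ᵢ |{τ<∞}|_{σ i}^{1/p i}. -/
def SpCond {m0 : MeasurableSpace Ω} (μ : Measure Ω) (ℱ : Filtration ℕ m0)
    (p : ℕ → ℝ) (p₀ : ℝ) (v : Ω → ℝ) (ω : ℕ → Ω → ℝ) (C : ℝ≥0∞) : Prop :=
  ∀ τ : Ω → ℕ∞, IsStopT ℱ τ →
    (∫⁻ x in {x | τ x ≠ ⊤},
        doobM μ ℱ (fun i => Set.indicator {y | τ y ≠ ⊤} (sigmaW (ω i) (p i))) x ^ p₀ *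
          ENNReal.ofReal (v x) ∂μ) ^ (1 / p₀)
      ≤ C * prodLim (fun i =>
          (∫⁻ x in {x | τ x ≠ ⊤}, ENNReal.ofReal (sigmaW (ω i) (p i) x) ∂μ) ^ (1 / p i))

/-- The standing assumptions of Section 3 of the paper. -/
structure Standing {m0 : MeasurableSpace Ω} (μ : Measure Ω) (ℱ : Filtration ℕ m0)
    (p : ℕ → ℝ) (p₀ : ℝ) (v : Ω → ℝ) (ω : ℕ → Ω → ℝ) : Prop where
  hgen : (⨆ n, (ℱ n : MeasurableSpace Ω)) = m0
  hp : ∀ i, 1 < p i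
  hp₀ : 0 < p₀
  hps : HasSum (fun i => 1 / p i) (1 / p₀)
  hv : Measurable v
  hvpos : ∀ x, 0 < v x
  hvint : Integrable v μ
  hω : ∀ i, Measurable (ω i)
  hωpos : ∀ i x, 0 < ω i x
  hωint : ∀ i, Integrable (ω i) μ
  hσint : ∀ i, Integrable (sigmaW (ω i) (p i)) μ
  hσnorm : ∃ Lσ : ℝ≥0∞, Lσ ≠ ⊤ ∧
    HasProdLim (fun i => wNorm μ (sigmaW (ω i) (p i)) (p i) (ω i)) Lσ
  hEσ : ∀ n : ℕ, ∀ᵐ x ∂μ,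
    prodLim (fun i =>
      ENNReal.ofReal ((μ[sigmaW (ω i) (p i)|ℱ n]) x) ^ (1 / conjExp (p i))) ≠ ⊤
  hσpos : ∀ᵐ x ∂μ,
    0 < prodLim (fun i => ENNReal.ofReal (sigmaW (ω i) (p i) x) ^ (1 / p i))

section AuxLemmas

lemma prodLim_mono {a b : ℕ → ℝ≥0∞} (h : ∀ i, a i ≤ b i) : prodLim a ≤ prodLim b :=
  Filter.limsup_le_limsup (Filter.Eventually.of_forall fun k =>
    Finset.prod_le_prod' fun i _ => h i)

lemma prodLim_eq_zero {a : ℕ → ℝ≥0∞} {i0 : ℕ} (h : a i0 = 0) : prodLim a = 0 := by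
  have he : ∀ᶠ k in atTop, (∏ i ∈ Finset.range k, a i) = (fun _ => (0:ℝ≥0∞)) k := by
    filter_upwards [eventually_ge_atTop (i0+1)] with k hk
    exact Finset.prod_eq_zero (Finset.mem_range.mpr (by omega)) h
  rw [prodLim, limsup_congr he, limsup_const]

lemma measurable_prodLim {α : Type*} {mα : MeasurableSpace α} {a : ℕ → α → ℝ≥0∞}
    (h : ∀ i, Measurable (a i)) :
    Measurable fun x => prodLim fun i => a i x := by
  have heq : (fun x => prodLim fun i => a i x)
      = fun x => ⨅ n : ℕ, ⨆ k, ⨆ _ : k ≥ n, ∏ i ∈ Finset.range k, a i x := by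
    funext x
    rw [prodLim, limsup_eq_iInf_iSup_of_nat]
  rw [heq]
  exact Measurable.iInf fun n => Measurable.iSup fun k => Measurable.iSup fun _ =>
    Finset.measurable_prod _ fun i _ => h i

lemma hasProdLim_div_mul {a b : ℕ → ℝ≥0∞} {L : ℝ≥0∞} (hb0 : ∀ i, b i ≠ 0)
    (hbt : ∀ i, b i ≠ ∞) (hab : ∀ i, a i ≤ b i) (hL : HasProdLim b L) (hLt : L ≠ ∞) :
    HasProdLim a ((⨅ N, ∏ i ∈ Finset.range N, (a i / b i)) * L) := by
  set ρ : ℕ → ℝ≥0∞ := fun N => ∏ i ∈ Finset.range N, (a i / b i) with hρdef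
  have hone : ∀ i, a i / b i ≤ 1 := fun i =>
    (ENNReal.div_le_div_right (hab i) (b i)).trans_eq (ENNReal.div_self (hb0 i) (hbt i))
  have hanti : Antitone ρ := antitone_nat_of_succ_le fun n => by
    have : ρ (n+1) = ρ n * (a n / b n) := by
      rw [hρdef]; exact Finset.prod_range_succ _ n
    rw [this]
    calc ρ n * (a n / b n) ≤ ρ n * 1 := mul_le_mul_right (hone n) _
      _ = ρ n := mul_one _
  have h1 : Tendsto ρ atTop (nhds (⨅ N, ρ N)) := tendsto_atTop_iInf hanti
  have hne : (⨅ N, ρ N) ≠ ∞ := by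
    refine ne_top_of_le_ne_top (by simp : (1:ℝ≥0∞) ≠ ∞) ?_
    calc ⨅ N, ρ N ≤ ρ 0 := iInf_le _ 0
      _ = 1 := by simp [hρdef]
  have key : ∀ N, ∏ i ∈ Finset.range N, a i = ρ N * ∏ i ∈ Finset.range N, b i := by
    intro N
    rw [hρdef, ← Finset.prod_mul_distrib]
    exact Finset.prod_congr rfl fun i _ => (ENNReal.div_mul_cancel (hb0 i) (hbt i)).symm
  have := ENNReal.Tendsto.mul h1 (Or.inr hLt) hL (Or.inr hne)
  unfold HasProdLim
  simpa only [← key] using this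

lemma enn_amgm {θ : ℕ → ℝ} {x : ℕ → ℝ≥0∞} (N : ℕ) (hx : ∀ i, x i ≤ 1)
    (hθ : ∀ i, 0 ≤ θ i) (hs : ∑ i ∈ Finset.range N, θ i ≤ 1) :
    ∏ i ∈ Finset.range N, x i ^ θ i
      ≤ (∑ i ∈ Finset.range N, ENNReal.ofReal (θ i) * x i)
        + ENNReal.ofReal (1 - ∑ i ∈ Finset.range N, θ i) := by
  set T := ∑ i ∈ Finset.range N, θ i with hT
  set y : ℕ → ℝ := fun i => (x i).toReal with hy
  have hxy : ∀ i, x i = ENNReal.ofReal (y i) := fun i =>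
    (ENNReal.ofReal_toReal (ne_top_of_le_ne_top ENNReal.one_ne_top (hx i))).symm
  have hy0 : ∀ i, 0 ≤ y i := fun i => ENNReal.toReal_nonneg
  set w : ℕ → ℝ := fun i => if i < N then θ i else 1 - T with hw0
  set z : ℕ → ℝ := fun i => if i < N then y i else 1 with hz0
  have hwnn : ∀ i ∈ Finset.range (N+1), 0 ≤ w i := by
    intro i _
    by_cases h : i < N <;> simp [hw0, h, hθ i, sub_nonneg.mpr hs]
  have hw' : ∑ i ∈ Finset.range (N+1), w i = 1 := by
    rw [Finset.sum_range_succ]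
    have h1 : ∑ i ∈ Finset.range N, w i = T := Finset.sum_congr rfl fun i hi => by
      simp [hw0, Finset.mem_range.mp hi]
    rw [h1]
    simp [hw0]
  have hznn : ∀ i ∈ Finset.range (N+1), 0 ≤ z i := by
    intro i _
    by_cases h : i < N <;> simp [hz0, h, hy0 i]
  have hreal := Real.geom_mean_le_arith_mean_weighted (Finset.range (N+1)) w z hwnn hw' hznn
  have hL : ∏ i ∈ Finset.range (N+1), z i ^ w i = ∏ i ∈ Finset.range N, y i ^ θ i := by
    rw [Finset.prod_range_succ]
    have h1 : ∏ i ∈ Finset.range N, z i ^ w i = ∏ i ∈ Finset.range N, y i ^ θ i :=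
      Finset.prod_congr rfl fun i hi => by simp [hz0, hw0, Finset.mem_range.mp hi]
    rw [h1]
    simp [hz0, hw0, Real.one_rpow]
  have hR : ∑ i ∈ Finset.range (N+1), w i * z i
      = (∑ i ∈ Finset.range N, θ i * y i) + (1 - T) := by
    rw [Finset.sum_range_succ]
    have h1 : ∑ i ∈ Finset.range N, w i * z i = ∑ i ∈ Finset.range N, θ i * y i :=
      Finset.sum_congr rfl fun i hi => by simp [hz0, hw0, Finset.mem_range.mp hi]
    rw [h1]
    simp [hz0, hw0]
  rw [hL, hR] at hreal
  calc ∏ i ∈ Finset.range N, x i ^ θ i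
      = ENNReal.ofReal (∏ i ∈ Finset.range N, y i ^ θ i) := by
        rw [ENNReal.ofReal_prod_of_nonneg (fun i _ => Real.rpow_nonneg (hy0 i) _)]
        exact Finset.prod_congr rfl fun i _ => by
          rw [hxy i, ← ENNReal.ofReal_rpow_of_nonneg (hy0 i) (hθ i)]
    _ ≤ ENNReal.ofReal ((∑ i ∈ Finset.range N, θ i * y i) + (1 - T)) :=
        ENNReal.ofReal_le_ofReal hreal
    _ ≤ _ := by
        refine (ENNReal.ofReal_add_le).trans ?_
        gcongr
        rw [ENNReal.ofReal_sum_of_nonneg (fun i _ => mul_nonneg (hθ i) (hy0 i))]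
        refine Finset.sum_le_sum fun i _ => ?_
        rw [ENNReal.ofReal_mul (hθ i), hxy i]


lemma measurableSet_tau_eq {m0 : MeasurableSpace Ω} {ℱ : Filtration ℕ m0} {τ : Ω → ℕ∞}
    (hτ : IsStopT ℱ τ) (n : ℕ) : MeasurableSet[ℱ n] {x | τ x = (n : ℕ∞)} := by
  have hset : {x | τ x = (n : ℕ∞)}
      = {x | τ x ≤ (n : ℕ∞)} \ ⋃ m ∈ Finset.range n, {x | τ x ≤ (m : ℕ∞)} := by
    ext x
    simp only [Set.mem_diff, Set.mem_setOf_eq, Set.mem_iUnion, Finset.mem_range, not_exists]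
    constructor
    · rintro hx
      rw [hx]
      refine ⟨le_refl _, fun m hm hle => ?_⟩
      have : m < n := hm
      have hmn : n ≤ m := by exact_mod_cast hle
      omega
    · rintro ⟨h1, h2⟩
      have hne : τ x ≠ ⊤ := fun htop => by simp [htop] at h1
      obtain ⟨j, hj⟩ := WithTop.ne_top_iff_exists.mp hne
      rw [← hj] at h1 h2 ⊢
      have hjn : j ≤ n := WithTop.coe_le_coe.mp h1
      rcases lt_or_eq_of_le hjn with hlt | heq
      · exact absurd (le_refl (j : ℕ∞)) (h2 j hlt)
      · rw [heq]
        rfl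
  rw [hset]
  refine (hτ n).diff ?_
  refine MeasurableSet.biUnion (Finset.range n).countable_toSet fun m hm => ?_
  exact ℱ.mono (le_of_lt (Finset.mem_range.mp hm)) _ (hτ m)

lemma measurableSet_tau_ne_top {m0 : MeasurableSpace Ω} {ℱ : Filtration ℕ m0} {τ : Ω → ℕ∞}
    (hτ : IsStopT ℱ τ) : MeasurableSet {x | τ x ≠ ⊤} := by
  have : {x | τ x ≠ ⊤} = ⋃ n : ℕ, {x | τ x ≤ (n : ℕ∞)} := by
    ext x
    simp only [Set.mem_setOf_eq, Set.mem_iUnion]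
    constructor
    · intro hx
      rcases WithTop.ne_top_iff_exists.mp hx with ⟨j, hj⟩
      exact ⟨(τ x).toNat, (ENat.coe_toNat hx).ge⟩
    · rintro ⟨n, hn⟩ htop
      rw [htop] at hn
      exact absurd hn (by simp)
  rw [this]
  exact MeasurableSet.iUnion fun n => ℱ.le n _ (hτ n)

lemma measurable_toNat_tau {m0 : MeasurableSpace Ω} {ℱ : Filtration ℕ m0} {τ : Ω → ℕ∞}
    (hτ : IsStopT ℱ τ) : Measurable fun x => (τ x).toNat := by
  apply measurable_to_countable'
  intro n
  rcases Nat.eq_zero_or_pos n with rfl | hn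
  · have : (fun x => (τ x).toNat) ⁻¹' {0} = {x | τ x = (0:ℕ∞)} ∪ {x | τ x ≠ ⊤}ᶜ := by
      ext x
      simp only [Set.mem_preimage, Set.mem_singleton_iff, Set.mem_union, Set.mem_setOf_eq,
        Set.mem_compl_iff, ENat.toNat_eq_zero, not_not]
    rw [show (fun x => (τ x).toNat) ⁻¹' {0} = {x | τ x = (0:ℕ∞)} ∪ {x | τ x ≠ ⊤}ᶜ from this]
    exact (ℱ.le 0 _ (measurableSet_tau_eq hτ 0)).union (measurableSet_tau_ne_top hτ).compl
  · have : (fun x => (τ x).toNat) ⁻¹' {n} = {x | τ x = (n:ℕ∞)} := by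
      ext x
      simp only [Set.mem_preimage, Set.mem_singleton_iff, Set.mem_setOf_eq]
      constructor
      · intro hx
        have hne : τ x ≠ ⊤ := by
          intro htop
          rw [htop] at hx
          simp at hx
          omega
        rw [← ENat.coe_toNat hne, hx]
      · intro hx
        rw [hx]
        simp
    rw [this]
    exact ℱ.le n _ (measurableSet_tau_eq hτ n)

lemma measurable_stopCE {m0 : MeasurableSpace Ω} {μ : Measure Ω} {ℱ : Filtration ℕ m0}
    {f : Ω → ℝ} {τ : Ω → ℕ∞} (hτ : IsStopT ℱ τ) : Measurable (stopCE μ ℱ f τ) := by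
  intro t ht
  have hset : stopCE μ ℱ f τ ⁻¹' t
      = ⋃ n : ℕ, ((fun x => (τ x).toNat) ⁻¹' {n}) ∩ ((μ[f|ℱ n]) ⁻¹' t) := by
    ext x
    simp only [Set.mem_preimage, Set.mem_iUnion, Set.mem_inter_iff, Set.mem_singleton_iff]
    constructor
    · intro hx
      exact ⟨(τ x).toNat, rfl, hx⟩
    · rintro ⟨n, hn, hx⟩
      simpa [stopCE, hn] using hx
  rw [hset]
  exact MeasurableSet.iUnion fun n =>
    ((measurable_toNat_tau hτ) (measurableSet_singleton n)).inter
      ((stronglyMeasurable_condExp.mono (ℱ.le n)).measurable ht)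


end AuxLemmas

/-- If the weak-type inequality holds (for some finite constant), then the testing
inequality over stopping times holds for all admissible f⃗. -/
theorem testIneq_of_weakIneq
    {m0 : MeasurableSpace Ω} (μ : Measure Ω) [IsProbabilityMeasure μ] (hc : μ.IsComplete)
    (ℱ : Filtration ℕ m0) (p : ℕ → ℝ) (p₀ : ℝ) (v : Ω → ℝ) (ω : ℕ → Ω → ℝ)
    (hS : Standing μ ℱ p p₀ v ω)
    (h : ∃ C : ℝ≥0∞, C ≠ ⊤ ∧ WeakIneq μ ℱ p p₀ v ω C) :
    ∃ C' : ℝ≥0∞, C' ≠ ⊤ ∧ TestIneq μ ℱ p p₀ v ω C' := by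
  classical
  obtain ⟨C, hCt, hweak⟩ := h
  refine ⟨4 * C, ENNReal.mul_ne_top (by norm_num) hCt, ?_⟩
  intro τ hτ f Lf hAdm
  obtain ⟨hmf, hf0, hfin, hLft, hLprod⟩ := hAdm
  have hp₀ : (0:ℝ) < p₀ := hS.hp₀
  have hp₀' : (0:ℝ) < 1 / p₀ := by positivity
  have hppos : ∀ i, (0:ℝ) < p i := fun i => lt_trans one_pos (hS.hp i)
  set vv : Ω → ℝ≥0∞ := fun x => ENNReal.ofReal (v x) with hvv
  set T : Set Ω := {x | τ x ≠ ⊤} with hTdef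
  set G : Ω → ℝ≥0∞ := fun x => prodLim fun i => ENNReal.ofReal (stopCE μ ℱ (f i) τ x) with hGdef
  show (∫⁻ x in T, G x ^ p₀ * vv x ∂μ) ^ (1 / p₀) ≤ 4 * C * Lf
  suffices hI : (∫⁻ x in T, G x ^ p₀ * vv x ∂μ) ≤ (4 * C * Lf) ^ p₀ by
    have h2 := ENNReal.rpow_le_rpow hI (le_of_lt hp₀')
    rwa [← ENNReal.rpow_mul, mul_one_div, div_self (ne_of_gt hp₀), ENNReal.rpow_one] at h2
  -- Case A : some f i is not integrable
  by_cases hint : ∀ i, Integrable (f i) μ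
  swap
  · push_neg at hint
    obtain ⟨i₀, hi₀⟩ := hint
    have hG0 : ∀ x, G x = 0 := fun x => prodLim_eq_zero (i0 := i₀) (by
      simp [stopCE, condExp_of_not_integrable hi₀])
    have hz : ∀ x, G x ^ p₀ * vv x = 0 := fun x => by
      rw [hG0 x, ENNReal.zero_rpow_of_pos hp₀, zero_mul]
    calc (∫⁻ x in T, G x ^ p₀ * vv x ∂μ) = 0 := by simp [hz]
      _ ≤ (4 * C * Lf) ^ p₀ := zero_le
  -- Case B : some wNorm is zero
  by_cases hb0 : ∀ i, wNorm μ (f i) (p i) (ω i) ≠ 0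
  swap
  · push_neg at hb0
    obtain ⟨i₀, hi₀⟩ := hb0
    have hint0 : ∫⁻ x, ENNReal.ofReal (f i₀ x) ^ (p i₀) * ENNReal.ofReal (ω i₀ x) ∂μ = 0 := by
      rw [wNorm] at hi₀
      rcases ENNReal.rpow_eq_zero_iff.mp hi₀ with ⟨h1, _⟩ | ⟨_, h2⟩
      · exact h1
      · exfalso
        have : (0:ℝ) < 1 / p i₀ := one_div_pos.mpr (hppos i₀)
        linarith
    have hmeas0 : Measurable fun x => ENNReal.ofReal (f i₀ x) ^ (p i₀) * ENNReal.ofReal (ω i₀ x) :=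
      ((ENNReal.measurable_ofReal.comp (hmf i₀)).pow_const _).mul
        (ENNReal.measurable_ofReal.comp (hS.hω i₀))
    have hf0ae : f i₀ =ᵐ[μ] 0 := by
      filter_upwards [(lintegral_eq_zero_iff hmeas0).mp hint0] with x hx
      rcases mul_eq_zero.mp hx with h1 | h2
      · have h1' : ENNReal.ofReal (f i₀ x) = 0 := by
          rcases ENNReal.rpow_eq_zero_iff.mp h1 with ⟨ha, _⟩ | ⟨_, hb⟩
          · exact ha
          · exfalso; linarith [hppos i₀]
        have := ENNReal.ofReal_eq_zero.mp h1'
        exact le_antisymm this (hf0 i₀ x)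
      · exfalso
        exact absurd (ENNReal.ofReal_eq_zero.mp h2) (not_le.mpr (hS.hωpos i₀ x))
    have hce : ∀ n : ℕ, (μ[f i₀|ℱ n]) =ᵐ[μ] 0 := fun n =>
      (condExp_congr_ae hf0ae).trans (by rw [condExp_zero])
    have hGae : ∀ᵐ x ∂μ, G x = 0 := by
      filter_upwards [ae_all_iff.mpr hce] with x hx
      exact prodLim_eq_zero (i0 := i₀) (by simp [stopCE, hx ((τ x).toNat)])
    have hz : ∀ᵐ x ∂μ.restrict T, G x ^ p₀ * vv x = 0 := by
      filter_upwards [ae_restrict_of_ae hGae] with x hx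
      rw [hx, ENNReal.zero_rpow_of_pos hp₀, zero_mul]
    calc (∫⁻ x in T, G x ^ p₀ * vv x ∂μ) = 0 := by rw [lintegral_congr_ae hz, lintegral_zero]
      _ ≤ (4 * C * Lf) ^ p₀ := zero_le
  -- Main case
  have hθ0 : ∀ i, (0:ℝ) ≤ p₀ / p i := fun i => le_of_lt (div_pos hp₀ (hppos i))
  have hθsum : HasSum (fun i => p₀ / p i) 1 := by
    have h1 := hS.hps.mul_left p₀
    rw [mul_one_div, div_self (ne_of_gt hp₀)] at h1
    have h2 : (fun i => p₀ * (1 / p i)) = fun i => p₀ / p i := by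
      funext i
      rw [mul_one_div]
    rwa [h2] at h1
  have hCLt : C * Lf ≠ ∞ := ENNReal.mul_ne_top hCt hLft
  -- dyadic constants
  set c : ℤ → ℝ≥0∞ := fun k => (2:ℝ≥0∞) ^ k with hcdef
  have hccoe : ∀ k : ℤ, (((2:ℝ≥0) ^ k : ℝ≥0) : ℝ≥0∞) = c k := fun k => by
    rw [hcdef, ENNReal.coe_zpow two_ne_zero]
    norm_num
  have hc0 : ∀ k, c k ≠ 0 := fun k => by
    rw [← hccoe k]
    exact ENNReal.coe_ne_zero.mpr (zpow_ne_zero k (two_ne_zero : (2:ℝ≥0) ≠ 0))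
  have hct : ∀ k, c k ≠ ∞ := fun k => by rw [← hccoe k]; exact ENNReal.coe_ne_top
  -- the sets
  set B : ℤ → Set Ω := fun k => T ∩ {x | c k < G x ∧ G x ≤ c (k+1)} with hBdef
  have hmG : Measurable G := measurable_prodLim fun i =>
    ENNReal.measurable_ofReal.comp (measurable_stopCE hτ)
  have hmT : MeasurableSet T := measurableSet_tau_ne_top hτ
  have hmB : ∀ k, MeasurableSet (B k) := fun k =>
    hmT.inter ((hmG measurableSet_Ioi).inter (hmG measurableSet_Iic))
  have hdisj : Pairwise (Function.onFun Disjoint B) := by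
    have key : ∀ k k' : ℤ, k < k' → Disjoint (B k) (B k') := by
      intro k k' hlt
      refine Set.disjoint_left.mpr fun x hx hx' => ?_
      have h1 : G x ≤ c (k+1) := hx.2.2
      have h2 : c k' < G x := hx'.2.1
      have h3 : c (k+1) ≤ c k' := ENNReal.zpow_le_of_le (by norm_num) (by omega)
      exact absurd (h2.trans_le (h1.trans h3)) (lt_irrefl _)
    intro k k' hkk'
    rcases lt_or_gt_of_ne hkk' with hlt | hgt
    · exact key k k' hlt
    · exact (key k' k hgt).symm
  have hcover : T ⊆ (T ∩ {x | G x = 0}) ∪ ((T ∩ {x | G x = ∞}) ∪ ⋃ k : ℤ, B k) := by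
    intro x hx
    rcases eq_or_ne (G x) 0 with h0 | h0
    · exact Or.inl ⟨hx, h0⟩
    rcases eq_or_ne (G x) ∞ with hi | hi
    · exact Or.inr (Or.inl ⟨hx, hi⟩)
    obtain ⟨k, hk⟩ := ENNReal.exists_mem_Ioc_zpow (y := (2:ℝ≥0∞)) h0 hi (by norm_num) (by norm_num)
    exact Or.inr (Or.inr (Set.mem_iUnion.mpr ⟨k, hx, hk.1, hk.2⟩))
  have hsplit : (∫⁻ x in T, G x ^ p₀ * vv x ∂μ)
      ≤ (∫⁻ x in T ∩ {x | G x = 0}, G x ^ p₀ * vv x ∂μ)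
        + ((∫⁻ x in T ∩ {x | G x = ∞}, G x ^ p₀ * vv x ∂μ)
          + ∑' k : ℤ, ∫⁻ x in B k, G x ^ p₀ * vv x ∂μ) := by
    refine (lintegral_mono_set hcover).trans ?_
    refine (lintegral_union_le _ _ _).trans ?_
    gcongr
    refine (lintegral_union_le _ _ _).trans ?_
    gcongr
    exact lintegral_iUnion_le _ _
  -- zero piece
  have hzero : (∫⁻ x in T ∩ {x | G x = 0}, G x ^ p₀ * vv x ∂μ) = 0 := by
    have hm : MeasurableSet (T ∩ {x | G x = 0}) := hmT.inter (hmG (measurableSet_singleton 0))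
    have : (∫⁻ x in T ∩ {x | G x = 0}, G x ^ p₀ * vv x ∂μ)
        = ∫⁻ _x in T ∩ {x | G x = 0}, 0 ∂μ := by
      refine setLIntegral_congr_fun hm (fun x hx => ?_)
      rw [show G x = 0 from hx.2, ENNReal.zero_rpow_of_pos hp₀, zero_mul]
    rw [this, lintegral_zero]
  -- doobM dominations
  have hGM : ∀ x, G x ≤ doobM μ ℱ f x := fun x =>
    le_iSup (fun n => prodLim fun i => ENNReal.ofReal ((μ[f i|ℱ n]) x)) ((τ x).toNat)
  have hmv : Measurable vv := ENNReal.measurable_ofReal.comp hS.hv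
  -- infinity piece
  have hinfty : (∫⁻ x in T ∩ {x | G x = ∞}, G x ^ p₀ * vv x ∂μ) = 0 := by
    have hwf := hweak f Lf ⟨hmf, hf0, hfin, hLft, hLprod⟩
    have hsub : ∀ m : ℕ, (T ∩ {x | G x = ∞}) ⊆
        {x | ((m:ℝ≥0):ℝ≥0∞) < doobM μ ℱ f x} := by
      intro m x hx
      have h1 : doobM μ ℱ f x = ∞ := top_le_iff.mp ((hx.2 : G x = ∞) ▸ hGM x)
      rw [Set.mem_setOf_eq, h1]
      exact ENNReal.coe_lt_top
    set X := ∫⁻ x in T ∩ {x | G x = ∞}, vv x ∂μ with hX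
    have hXbound : ∀ m : ℕ, ((m:ℝ≥0):ℝ≥0∞) * X ^ (1/p₀) ≤ C * Lf := by
      intro m
      refine le_trans ?_ (le_trans (le_iSup (fun lam : ℝ≥0 => (lam : ℝ≥0∞) *
        (∫⁻ x in {x | (lam:ℝ≥0∞) < doobM μ ℱ f x}, ENNReal.ofReal (v x) ∂μ) ^ (1/p₀))
        ((m:ℝ≥0))) hwf)
      exact mul_le_mul_right (ENNReal.rpow_le_rpow (lintegral_mono_set (hsub m))
        (le_of_lt hp₀')) _
    have hXrz : X ^ (1/p₀) = 0 := by
      by_contra hne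
      have hnatle : ∀ m : ℕ, ((m:ℝ≥0):ℝ≥0∞) ≤ (C * Lf) / (X ^ (1/p₀)) := by
        intro m
        rcases eq_or_ne (X ^ (1/p₀)) ∞ with htp | htp
        · exfalso
          have := hXbound 1
          rw [htp] at this
          simp at this
          exact hCLt (by simpa using this)
        · exact (ENNReal.le_div_iff_mul_le (Or.inl hne) (Or.inl htp)).mpr (hXbound m)
      obtain ⟨m, hm⟩ := ENNReal.exists_nat_gt (show (C * Lf) / (X ^ (1/p₀)) ≠ ∞ from
        (ENNReal.div_lt_top hCLt hne).ne)
      exact absurd (hnatle m) (by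

        simpa using hm)
    have hX0 : X = 0 := by
      have h3 := congrArg (· ^ p₀) hXrz
      simpa [one_div, ENNReal.rpow_inv_rpow (ne_of_gt hp₀),
        ENNReal.zero_rpow_of_pos hp₀] using h3
    refine le_antisymm ?_ (zero_le)
    calc (∫⁻ x in T ∩ {x | G x = ∞}, G x ^ p₀ * vv x ∂μ)
        ≤ ∫⁻ x in T ∩ {x | G x = ∞}, ∞ * vv x ∂μ :=
          lintegral_mono fun x => mul_le_mul_left le_top _
      _ = ∞ * X := by rw [lintegral_const_mul _ hmv]
      _ = 0 := by rw [hX0, mul_zero]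
  -- truncated functions
  set g : ℤ → ℕ → Ω → ℝ := fun k i => (B k).indicator (f i) with hgdef
  set a : ℤ → ℕ → ℝ≥0∞ := fun k i => wNorm μ (g k i) (p i) (ω i) with hadef
  set bb : ℕ → ℝ≥0∞ := fun i => wNorm μ (f i) (p i) (ω i) with hbbdef
  set r : ℤ → ℝ≥0∞ := fun k => ⨅ N, ∏ i ∈ Finset.range N, (a k i / bb i) with hrdef
  set L : ℤ → ℝ≥0∞ := fun k => r k * Lf with hLdef
  have hind_le : ∀ k i x, Set.indicator (B k) (f i) x ≤ f i x := fun k i x =>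
    Set.indicator_le_self' (fun y _ => hf0 i y) x
  have hab : ∀ k i, a k i ≤ bb i := by
    intro k i
    refine ENNReal.rpow_le_rpow (lintegral_mono fun x => ?_)
      (le_of_lt (one_div_pos.mpr (hppos i)))
    exact mul_le_mul_left (ENNReal.rpow_le_rpow
      (ENNReal.ofReal_le_ofReal (hind_le k i x)) (le_of_lt (hppos i))) _
  have hprod_k : ∀ k, HasProdLim (fun i => a k i) (L k) := fun k =>
    hasProdLim_div_mul hb0 hfin (hab k) hLprod hLft
  have hr1 : ∀ k, r k ≤ 1 := fun k => (iInf_le _ 0).trans_eq (by simp)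
  have hLk_t : ∀ k, L k ≠ ∞ := fun k =>
    ENNReal.mul_ne_top (ne_top_of_le_ne_top ENNReal.one_ne_top (hr1 k)) hLft
  have hAdmk : ∀ k, Adm μ p ω (g k) (L k) := fun k =>
    ⟨fun i => (hmf i).indicator (hmB k),
     fun i x => Set.indicator_nonneg (fun y _ => hf0 i y) x,
     fun i => ne_top_of_le_ne_top (hfin i) (hab k i),
     hLk_t k, hprod_k k⟩
  -- a.e. lower bound for the maximal function of the truncation
  have hae : ∀ k : ℤ, ∀ᵐ x ∂μ, x ∈ B k → c k < doobM μ ℱ (g k) x := by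
    intro k
    have main : ∀ n : ℕ, ∀ᵐ x ∂μ, x ∈ B k ∩ {x | τ x = (n:ℕ∞)} →
        c k < doobM μ ℱ (g k) x := by
      intro n
      set H : Ω → ℝ≥0∞ := fun x => prodLim fun i => ENNReal.ofReal ((μ[f i|ℱ n]) x) with hHdef
      have hmH : Measurable[ℱ n] H := measurable_prodLim fun i =>
        ENNReal.measurable_ofReal.comp (stronglyMeasurable_condExp.measurable)
      set S : Set Ω := {x | τ x = (n:ℕ∞)} ∩ {x | c k < H x ∧ H x ≤ c (k+1)} with hSdef
      have hmS : MeasurableSet[ℱ n] S :=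
        (measurableSet_tau_eq hτ n).inter
          ((hmH measurableSet_Ioi).inter (hmH measurableSet_Iic))
      have hGH : ∀ x, τ x = (n:ℕ∞) → G x = H x := by
        intro x hxn
        rw [hGdef, hHdef]
        simp only [stopCE, hxn, ENat.toNat_coe]
      have hSeq : B k ∩ {x | τ x = (n:ℕ∞)} = S := by
        ext x
        simp only [hBdef, hSdef, Set.mem_inter_iff, Set.mem_setOf_eq, hTdef]
        constructor
        · rintro ⟨⟨hxT, hxG⟩, hxn⟩
          exact ⟨hxn, by rwa [← hGH x hxn]⟩
        · rintro ⟨hxn, hxH⟩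
          have hxT : τ x ≠ ⊤ := by rw [hxn]; simp
          exact ⟨⟨hxT, by rwa [hGH x hxn]⟩, hxn⟩
      have hcei : ∀ i : ℕ, ∀ᵐ x ∂μ, x ∈ S → (μ[f i|ℱ n]) x ≤ (μ[g k i|ℱ n]) x := by
        intro i
        have hint_ind : Integrable (S.indicator (f i)) μ := (hint i).indicator ((ℱ.le n) _ hmS)
        have h1 : μ[S.indicator (f i)|ℱ n] =ᵐ[μ] S.indicator (μ[f i|ℱ n]) :=
          condExp_indicator (hint i) hmS
        have h2 : μ[S.indicator (f i)|ℱ n] ≤ᵐ[μ] μ[g k i|ℱ n] := by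
          refine condExp_mono hint_ind ((hint i).indicator (hmB k))
            (ae_of_all _ fun x => ?_)
          have hsub : S ⊆ B k := by rw [← hSeq]; exact Set.inter_subset_left
          exact Set.indicator_le_indicator_of_subset hsub (fun y => hf0 i y) x
        filter_upwards [h1, h2] with x hx1 hx2 hxS
        calc (μ[f i|ℱ n]) x = S.indicator (μ[f i|ℱ n]) x := (Set.indicator_of_mem hxS _).symm
          _ = (μ[S.indicator (f i)|ℱ n]) x := hx1.symm
          _ ≤ (μ[g k i|ℱ n]) x := hx2
      filter_upwards [ae_all_iff.mpr hcei] with x hx hxmem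
      have hxS : x ∈ S := by rw [← hSeq]; exact hxmem
      have hH : c k < H x := hxS.2.1
      have hle : H x ≤ prodLim fun i => ENNReal.ofReal ((μ[g k i|ℱ n]) x) :=
        prodLim_mono fun i => ENNReal.ofReal_le_ofReal (hx i hxS)
      exact lt_of_lt_of_le hH (le_trans hle
        (le_iSup (fun n => prodLim fun i => ENNReal.ofReal ((μ[g k i|ℱ n]) x)) n))
    filter_upwards [ae_all_iff.mpr main] with x hx hxB
    have hxT : τ x ≠ ⊤ := hxB.1
    obtain ⟨n, hn⟩ : ∃ n : ℕ, τ x = (n : ℕ∞) := ⟨(τ x).toNat, (ENat.coe_toNat hxT).symm⟩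
    exact hx n ⟨hxB, hn⟩
  -- per-k integral bound
  have hBk_bound : ∀ k : ℤ, (∫⁻ x in B k, G x ^ p₀ * vv x ∂μ) ≤ (4 * (C * L k)) ^ p₀ := by
    intro k
    set lamk : ℝ≥0 := 2 ^ (k-1) with hlamk
    have hlamc : ((lamk : ℝ≥0∞)) = (2:ℝ≥0∞) ^ (k-1) := by
      rw [hlamk, ENNReal.coe_zpow two_ne_zero]
      norm_num
    have hlam0 : (lamk : ℝ≥0∞) ≠ 0 := by
      rw [hlamc]
      exact hc0 (k-1)
    have hlamt : (lamk : ℝ≥0∞) ≠ ∞ := ENNReal.coe_ne_top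
    have hlamle : (lamk : ℝ≥0∞) ≤ c k := by
      rw [hlamc, hcdef]
      exact ENNReal.zpow_le_of_le (by norm_num) (by omega)
    have hsubset : ∀ᵐ x ∂μ, x ∈ B k → x ∈ {x | (lamk:ℝ≥0∞) < doobM μ ℱ (g k) x} := by
      filter_upwards [hae k] with x hx hxB
      exact lt_of_le_of_lt hlamle (hx hxB)
    have hν : (∫⁻ x in B k, vv x ∂μ)
        ≤ ∫⁻ x in {x | (lamk:ℝ≥0∞) < doobM μ ℱ (g k) x}, vv x ∂μ := by
      refine lintegral_mono' (Measure.restrict_mono' ?_ le_rfl) le_rfl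
      exact hsubset
    have hwkle : (lamk:ℝ≥0∞) * (∫⁻ x in B k, vv x ∂μ) ^ (1/p₀) ≤ C * L k := by
      refine le_trans ?_ (le_trans (le_iSup (fun lam : ℝ≥0 => (lam : ℝ≥0∞) *
        (∫⁻ x in {x | (lam:ℝ≥0∞) < doobM μ ℱ (g k) x}, ENNReal.ofReal (v x) ∂μ) ^ (1/p₀))
        lamk) (hweak (g k) (L k) (hAdmk k)))
      exact mul_le_mul_right (ENNReal.rpow_le_rpow hν (le_of_lt hp₀')) _
    have h3 : (∫⁻ x in B k, vv x ∂μ) ^ (1/p₀) ≤ (lamk:ℝ≥0∞)⁻¹ * (C * L k) := by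
      calc (∫⁻ x in B k, vv x ∂μ) ^ (1/p₀)
          = ((lamk:ℝ≥0∞)⁻¹ * (lamk:ℝ≥0∞)) * (∫⁻ x in B k, vv x ∂μ) ^ (1/p₀) := by
            rw [ENNReal.inv_mul_cancel hlam0 hlamt, one_mul]
        _ = (lamk:ℝ≥0∞)⁻¹ * ((lamk:ℝ≥0∞) * (∫⁻ x in B k, vv x ∂μ) ^ (1/p₀)) := mul_assoc _ _ _
        _ ≤ (lamk:ℝ≥0∞)⁻¹ * (C * L k) := mul_le_mul_right hwkle _
    have hν2 : (∫⁻ x in B k, vv x ∂μ) ≤ ((lamk:ℝ≥0∞)⁻¹ * (C * L k)) ^ p₀ := by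
      calc (∫⁻ x in B k, vv x ∂μ)
          = ((∫⁻ x in B k, vv x ∂μ) ^ (1/p₀)) ^ p₀ := by
            rw [one_div, ENNReal.rpow_inv_rpow (ne_of_gt hp₀)]
        _ ≤ ((lamk:ℝ≥0∞)⁻¹ * (C * L k)) ^ p₀ := ENNReal.rpow_le_rpow h3 (le_of_lt hp₀)
    have h4 : c (k+1) * ((lamk:ℝ≥0∞))⁻¹ = 4 := by
      have hnn : (2:ℝ≥0) ^ (k+1) * ((2:ℝ≥0) ^ (k-1))⁻¹ = 4 := by
        rw [← zpow_neg, ← zpow_add₀ (two_ne_zero : (2:ℝ≥0) ≠ 0)]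
        have he : k + 1 + -(k-1) = (2:ℤ) := by ring
        rw [he, show (2:ℤ) = ((2:ℕ):ℤ) from rfl, zpow_natCast]
        norm_num
      rw [← hccoe (k+1), hlamk,
        ← ENNReal.coe_inv (zpow_ne_zero _ (two_ne_zero : (2:ℝ≥0) ≠ 0)), ← ENNReal.coe_mul, hnn]
      norm_num
    calc (∫⁻ x in B k, G x ^ p₀ * vv x ∂μ)
        ≤ ∫⁻ x in B k, (c (k+1)) ^ p₀ * vv x ∂μ :=
          setLIntegral_mono' (hmB k) (fun x hx =>
            mul_le_mul_left (ENNReal.rpow_le_rpow hx.2.2 (le_of_lt hp₀)) _)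
      _ = (c (k+1)) ^ p₀ * ∫⁻ x in B k, vv x ∂μ :=
          lintegral_const_mul' _ _ (ENNReal.rpow_ne_top_of_nonneg (le_of_lt hp₀) (hct (k+1)))
      _ ≤ (c (k+1)) ^ p₀ * ((lamk:ℝ≥0∞)⁻¹ * (C * L k)) ^ p₀ := mul_le_mul_right hν2 _
      _ = (c (k+1) * ((lamk:ℝ≥0∞)⁻¹ * (C * L k))) ^ p₀ :=
          (ENNReal.mul_rpow_of_nonneg _ _ (le_of_lt hp₀)).symm
      _ = (4 * (C * L k)) ^ p₀ := by rw [← mul_assoc, h4]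
  -- summation of L k ^ p₀ via AM-GM
  have hsumL : ∑' k : ℤ, (L k) ^ p₀ ≤ Lf ^ p₀ := by
    set X : ℤ → ℕ → ℝ≥0∞ := fun k i => (a k i / bb i) ^ (p i) with hXdef
    have hdiv1 : ∀ k i, a k i / bb i ≤ 1 := fun k i =>
      (ENNReal.div_le_div_right (hab k i) _).trans_eq (ENNReal.div_self (hb0 i) (hfin i))
    have hX1 : ∀ k i, X k i ≤ 1 := fun k i =>
      ENNReal.rpow_le_one (hdiv1 k i) (le_of_lt (hppos i))
    have hLft' : Lf ^ p₀ ≠ ∞ := ENNReal.rpow_ne_top_of_nonneg (le_of_lt hp₀) hLft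
    have hclaim : ∀ k, L k ^ p₀ ≤ Lf ^ p₀ * ∑' i, ENNReal.ofReal (p₀ / p i) * X k i := by
      intro k
      have hstep : ∀ N : ℕ, L k ^ p₀ ≤ Lf ^ p₀ *
          ((∑ i ∈ Finset.range N, ENNReal.ofReal (p₀ / p i) * X k i)
            + ENNReal.ofReal (1 - ∑ i ∈ Finset.range N, p₀ / p i)) := by
        intro N
        have h1 : r k ≤ ∏ i ∈ Finset.range N, (a k i / bb i) := iInf_le _ N
        have h2 : L k ^ p₀ = r k ^ p₀ * Lf ^ p₀ :=
          ENNReal.mul_rpow_of_nonneg _ _ (le_of_lt hp₀)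
        have h3 : r k ^ p₀ ≤ ∏ i ∈ Finset.range N, X k i ^ (p₀ / p i) := by
          calc r k ^ p₀ ≤ (∏ i ∈ Finset.range N, (a k i / bb i)) ^ p₀ :=
                ENNReal.rpow_le_rpow h1 (le_of_lt hp₀)
            _ = ∏ i ∈ Finset.range N, (a k i / bb i) ^ p₀ :=
                (ENNReal.prod_rpow_of_nonneg (le_of_lt hp₀)).symm
            _ = ∏ i ∈ Finset.range N, X k i ^ (p₀ / p i) := by
                refine Finset.prod_congr rfl fun i _ => ?_
                show (a k i / bb i) ^ p₀ = ((a k i / bb i) ^ (p i)) ^ (p₀ / p i)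
                rw [← ENNReal.rpow_mul]
                congr 1
                rw [mul_div_assoc']
                rw [mul_comm, mul_div_assoc, div_self (ne_of_gt (hppos i)), mul_one]
        have hpsum_le : ∑ i ∈ Finset.range N, p₀ / p i ≤ 1 :=
          sum_le_hasSum _ (fun i _ => hθ0 i) hθsum
        have h4 := enn_amgm (θ := fun i => p₀ / p i) (x := X k) N (hX1 k) hθ0 hpsum_le
        calc L k ^ p₀ = r k ^ p₀ * Lf ^ p₀ := h2
          _ ≤ (∏ i ∈ Finset.range N, X k i ^ (p₀ / p i)) * Lf ^ p₀ := mul_le_mul_left h3 _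
          _ ≤ ((∑ i ∈ Finset.range N, ENNReal.ofReal (p₀ / p i) * X k i)
              + ENNReal.ofReal (1 - ∑ i ∈ Finset.range N, p₀ / p i)) * Lf ^ p₀ :=
            mul_le_mul_left h4 _
          _ = _ := mul_comm _ _
      have htail : Tendsto (fun N => ENNReal.ofReal (1 - ∑ i ∈ Finset.range N, p₀ / p i))
          atTop (nhds 0) := by
        have h5 : Tendsto (fun N => ∑ i ∈ Finset.range N, p₀ / p i) atTop (nhds 1) :=
          hθsum.tendsto_sum_nat
        have h6 : Tendsto (fun N => 1 - ∑ i ∈ Finset.range N, p₀ / p i) atTop (nhds 0) := by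
          have h7 := h5.const_sub 1
          simpa using h7
        have h8 := (ENNReal.continuous_ofReal.tendsto 0).comp h6
        simpa [Function.comp_def] using h8
      have hparts : Tendsto (fun N => ∑ i ∈ Finset.range N, ENNReal.ofReal (p₀ / p i) * X k i)
          atTop (nhds (∑' i, ENNReal.ofReal (p₀ / p i) * X k i)) :=
        ENNReal.tendsto_nat_tsum _
      have hlim := ENNReal.Tendsto.const_mul (a := Lf ^ p₀) (hparts.add htail)
        (Or.inr hLft')
      have h9 := ge_of_tendsto' hlim hstep
      simpa using h9
    have hXsum : ∀ i, ∑' k : ℤ, X k i ≤ 1 := by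
      intro i
      have hbp0 : bb i ^ (p i) ≠ 0 := by
        simp only [ne_eq, ENNReal.rpow_eq_zero_iff, not_or]
        constructor
        · rintro ⟨h1, _⟩; exact hb0 i h1
        · rintro ⟨h1, _⟩; exact hfin i h1
      have hbpt : bb i ^ (p i) ≠ ∞ :=
        ENNReal.rpow_ne_top_of_nonneg (le_of_lt (hppos i)) (hfin i)
      have hindint : ∀ k : ℤ, ∀ x, ENNReal.ofReal (Set.indicator (B k) (f i) x) ^ (p i)
            * ENNReal.ofReal (ω i x)
          = Set.indicator (B k)
              (fun y => ENNReal.ofReal (f i y) ^ (p i) * ENNReal.ofReal (ω i y)) x := by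
        intro k x
        by_cases hx : x ∈ B k
        · rw [Set.indicator_of_mem hx, Set.indicator_of_mem hx]
        · rw [Set.indicator_of_notMem hx, Set.indicator_of_notMem hx]
          rw [ENNReal.ofReal_zero, ENNReal.zero_rpow_of_pos (hppos i), zero_mul]
      have haep : ∀ k : ℤ, a k i ^ (p i)
          = ∫⁻ x in B k, ENNReal.ofReal (f i x) ^ (p i) * ENNReal.ofReal (ω i x) ∂μ := by
        intro k
        rw [hadef]
        simp only [wNorm, hgdef]
        rw [one_div, ENNReal.rpow_inv_rpow (ne_of_gt (hppos i))]
        rw [show (fun x => ENNReal.ofReal (Set.indicator (B k) (f i) x) ^ (p i)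
            * ENNReal.ofReal (ω i x)) = fun x => Set.indicator (B k)
              (fun y => ENNReal.ofReal (f i y) ^ (p i) * ENNReal.ofReal (ω i y)) x from
          funext (hindint k)]
        exact lintegral_indicator (hmB k) _
      have hbep : bb i ^ (p i)
          = ∫⁻ x, ENNReal.ofReal (f i x) ^ (p i) * ENNReal.ofReal (ω i x) ∂μ := by
        rw [hbbdef]
        simp only [wNorm]
        rw [one_div, ENNReal.rpow_inv_rpow (ne_of_gt (hppos i))]
      have hXeq : ∀ k, X k i = a k i ^ (p i) * (bb i ^ (p i))⁻¹ := by
        intro k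
        show (a k i / bb i) ^ (p i) = _
        rw [ENNReal.div_rpow_of_nonneg _ _ (le_of_lt (hppos i)), div_eq_mul_inv]
      have hsum_s : ∑' k : ℤ, a k i ^ (p i) ≤ bb i ^ (p i) := by
        simp only [haep]
        rw [← lintegral_iUnion hmB hdisj]
        rw [hbep]
        exact lintegral_mono_set (Set.subset_univ _) |>.trans_eq
          (by rw [Measure.restrict_univ])
      calc ∑' k : ℤ, X k i = (∑' k : ℤ, a k i ^ (p i)) * (bb i ^ (p i))⁻¹ := by
            simp only [hXeq]
            exact ENNReal.tsum_mul_right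
        _ ≤ (bb i ^ (p i)) * (bb i ^ (p i))⁻¹ := mul_le_mul_left hsum_s _
        _ = 1 := ENNReal.mul_inv_cancel hbp0 hbpt
    calc ∑' k : ℤ, L k ^ p₀
        ≤ ∑' k : ℤ, Lf ^ p₀ * ∑' i, ENNReal.ofReal (p₀ / p i) * X k i :=
          ENNReal.tsum_le_tsum hclaim
      _ = Lf ^ p₀ * ∑' k : ℤ, ∑' i, ENNReal.ofReal (p₀ / p i) * X k i :=
          ENNReal.tsum_mul_left
      _ = Lf ^ p₀ * ∑' i, ∑' k : ℤ, ENNReal.ofReal (p₀ / p i) * X k i := by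
          rw [ENNReal.tsum_comm]
      _ = Lf ^ p₀ * ∑' i, ENNReal.ofReal (p₀ / p i) * ∑' k : ℤ, X k i := by
          congr 1
          refine tsum_congr fun i => ?_
          exact ENNReal.tsum_mul_left
      _ ≤ Lf ^ p₀ * ∑' i, ENNReal.ofReal (p₀ / p i) * 1 := by
          refine mul_le_mul_right (ENNReal.tsum_le_tsum fun i => ?_) _
          exact mul_le_mul_right (hXsum i) _
      _ = Lf ^ p₀ * ∑' i, ENNReal.ofReal (p₀ / p i) := by simp
      _ ≤ Lf ^ p₀ * 1 := by
          refine mul_le_mul_right ?_ _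
          rw [← ENNReal.ofReal_tsum_of_nonneg hθ0 hθsum.summable, hθsum.tsum_eq]
          simp
      _ = Lf ^ p₀ := mul_one _
  -- final assembly
  have hfinal : ∑' k : ℤ, (∫⁻ x in B k, G x ^ p₀ * vv x ∂μ) ≤ (4 * C * Lf) ^ p₀ := by
    calc ∑' k : ℤ, (∫⁻ x in B k, G x ^ p₀ * vv x ∂μ)
        ≤ ∑' k : ℤ, (4 * (C * L k)) ^ p₀ := ENNReal.tsum_le_tsum hBk_bound
      _ = ∑' k : ℤ, (4 * C) ^ p₀ * (L k) ^ p₀ := by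
          refine tsum_congr fun k => ?_
          rw [← mul_assoc, ENNReal.mul_rpow_of_nonneg _ _ (le_of_lt hp₀)]
      _ = (4 * C) ^ p₀ * ∑' k : ℤ, (L k) ^ p₀ := ENNReal.tsum_mul_left
      _ ≤ (4 * C) ^ p₀ * Lf ^ p₀ := mul_le_mul_right hsumL _
      _ = (4 * C * Lf) ^ p₀ := (ENNReal.mul_rpow_of_nonneg _ _ (le_of_lt hp₀)).symm
  refine hsplit.trans ?_
  rw [hzero, hinfty, zero_add, zero_add]
  exact hfinal
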